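/- Assume char K ≠ 2. Let W and W' be totally B-isotropic subspaces of V × V with dim_K W = dim_K W' = N and dim_K (W ∩ (V × 0)) = dim_K (W' ∩ (V × 0)). Then there exist isometries g₁, g₂ of b such that (g₁ × g₂)(W) = W'. -/

import Mathlib

open Module

open LinearMap


open Module LinearMap

namespace WittAux

variable {F : Type*} [Field F] {M : Type*} [AddCommGroup M] [Module F M]

theorem symm_or_alt (hF : ringChar F ≠ 2) (β : M →ₗ[F] M →ₗ[F] F)
    (hrefl : ∀ v w : M, β v w = 0 ↔ β w v = 0) :
    (∀ x y, β x y = β y x) ∨ (∀ x, β x x = 0) := by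
  have two_ne : (2 : F) ≠ 0 := Ring.two_ne_zero hF
  have star : ∀ x y z, β x y * β z x = β x z * β y x := by
    intro x y z
    have h0 : β x (β x y • z - β x z • y) = 0 := by
      simp only [map_sub, map_smul, smul_eq_mul]
      ring
    have h1 := (hrefl _ _).mp h0
    simp only [map_sub, map_smul, LinearMap.sub_apply, LinearMap.smul_apply,
      smul_eq_mul, sub_eq_zero] at h1
    exact h1
  have keyA : ∀ x, β x x ≠ 0 → ∀ y, β x y = β y x := by
    intro x hx y
    have h := star x y x
    rw [mul_comm (β x y)] at h
    exact mul_left_cancel₀ hx h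
  by_cases halt : ∀ x, β x x = 0
  · exact Or.inr halt
  · left
    push_neg at halt
    obtain ⟨u, hu⟩ := halt
    intro x y
    rcases eq_or_ne (β x x) 0 with hxx | hxx
    · -- find c ≠ 0 with x + c•u anisotropic
      obtain ⟨c, hc0, hcv⟩ : ∃ c : F, c ≠ 0 ∧ β (x + c • u) (x + c • u) ≠ 0 := by
        have expand : ∀ c : F, β (x + c • u) (x + c • u)
            = c * ((β x u + β u x) + c * β u u) := by
          intro c
          simp only [map_add, map_smul, LinearMap.add_apply, LinearMap.smul_apply,
            smul_eq_mul, hxx]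
          ring
        rcases eq_or_ne ((β x u + β u x) + β u u) 0 with hs | hs
        · refine ⟨-1, neg_ne_zero.mpr one_ne_zero, ?_⟩
          rw [expand]
          have : (β x u + β u x) + (-1) * β u u = -(2 * β u u) + ((β x u + β u x) + β u u) := by
            ring
          rw [this, hs, add_zero]
          exact mul_ne_zero (neg_ne_zero.mpr one_ne_zero)
            (neg_ne_zero.mpr (mul_ne_zero two_ne hu))
        · refine ⟨1, one_ne_zero, ?_⟩
          rw [expand]
          simpa using hs
      have hv := keyA _ hcv
      have hu' := keyA u hu
      have e1 : β (x + c • u) y = β x y + c * β u y := by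
        simp [map_add, map_smul]
      have e2 : β y (x + c • u) = β y x + c * β y u := by
        simp [map_add, map_smul]
      have := hv y
      rw [e1, e2, hu' y] at this
      exact add_right_cancel this
    · exact keyA x hxx y

end WittAux

namespace WittAux

open LinearMap.BilinForm Submodule

variable {F : Type*} [Field F] {M : Type*} [AddCommGroup M] [Module F M]

theorem exists_eps (hF : ringChar F ≠ 2) (β : M →ₗ[F] M →ₗ[F] F)
    (hrefl : ∀ v w : M, β v w = 0 ↔ β w v = 0) :
    ∃ e : F, (e = 1 ∨ e = -1) ∧ ∀ x y, β y x = e * β x y := by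
  rcases symm_or_alt hF β hrefl with h | h
  · exact ⟨1, Or.inl rfl, fun x y => by rw [one_mul, h]⟩
  · refine ⟨-1, Or.inr rfl, fun x y => ?_⟩
    have h2 := h (x + y)
    simp only [map_add, LinearMap.add_apply, h x, h y] at h2
    linear_combination h2

/-- a linear isometry of a nondegenerate form is bijective -/
theorem bijective_of_isometry [FiniteDimensional F M] (β : M →ₗ[F] M →ₗ[F] F)
    (hnd : ∀ v : M, (∀ w : M, β v w = 0) → v = 0)
    (g : M →ₗ[F] M) (hg : ∀ x y, β (g x) (g y) = β x y) : Function.Bijective g := by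
  have hinj : Function.Injective g := by
    rw [← LinearMap.ker_eq_bot, eq_bot_iff]
    intro x hx
    rw [LinearMap.mem_ker] at hx
    have : x = 0 := by
      apply hnd
      intro w
      have := hg x w
      rw [hx] at this
      simpa using this.symm
    simp [this]
  exact ⟨hinj, (LinearMap.injective_iff_surjective).mp hinj⟩

theorem extend_isometry [FiniteDimensional F M] (β : LinearMap.BilinForm F M)
    (hrefl : β.IsRefl) (P : Submodule F M)
    (hP : (β.restrict P).Nondegenerate)
    (α : P ≃ₗ[F] P) (hα : ∀ x y : P, β (α x) (α y) = β (x : M) y) :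
    ∃ g : M ≃ₗ[F] M, (∀ x y, β (g x) (g y) = β x y) ∧ (∀ x : P, g x = α x)
      ∧ (∀ y ∈ β.orthogonal P, g y = y) := by
  have hc : IsCompl P (β.orthogonal P) := isCompl_orthogonal_of_restrict_nondegenerate hrefl hP
  set Q := β.orthogonal P with hQ
  let eqv := Submodule.prodEquivOfIsCompl P Q hc
  refine ⟨eqv.symm.trans ((α.prodCongr (LinearEquiv.refl F Q)).trans eqv), ?_, ?_, ?_⟩
  · intro x y
    obtain ⟨p, q, hx, -⟩ := Submodule.existsUnique_add_of_isCompl hc x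
    obtain ⟨p', q', hy, -⟩ := Submodule.existsUnique_add_of_isCompl hc y
    have horth : ∀ (a : P) (c : Q), β a c = 0 ∧ β (c : M) a = 0 := by
      intro a c
      have h1 : β (a : M) c = 0 := c.2 a a.2
      exact ⟨h1, hrefl _ _ h1⟩
    have happ : ∀ (a : P) (c : Q),
        eqv.symm.trans ((α.prodCongr (LinearEquiv.refl F Q)).trans eqv) ((a : M) + c)
          = (α a : M) + c := by
      intro a c
      have : ((a : M) + c) = eqv (a, c) := rfl
      simp only [LinearEquiv.trans_apply, this, LinearEquiv.symm_apply_apply]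
      rfl
    rw [← hx, ← hy, happ, happ]
    simp only [map_add, LinearMap.add_apply]
    rw [(horth (α p) q').1, (horth (α p') q).2, (horth p q').1, (horth p' q).2, hα]
  · intro x
    have := Submodule.prodEquivOfIsCompl_symm_apply_left (h := hc) (x := x)
    simp only [LinearEquiv.trans_apply, this]
    simp [eqv, Submodule.coe_prodEquivOfIsCompl', LinearEquiv.prodCongr_apply]
  · intro y hy
    have := Submodule.prodEquivOfIsCompl_symm_apply_right (h := hc) (x := ⟨y, hy⟩)
    simp only [LinearEquiv.trans_apply]
    rw [show (y : M) = ((⟨y, hy⟩ : Q) : M) from rfl, this]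
    simp [eqv, Submodule.coe_prodEquivOfIsCompl', LinearEquiv.prodCongr_apply]

end WittAux


open Module LinearMap

namespace WittAux

variable {F : Type*} [Field F] {M : Type*} [AddCommGroup M] [Module F M]

/-- Case 1 of T1: move x to y when β x y ≠ 0. -/
theorem move_isotropic_aux [FiniteDimensional F M] (β : M →ₗ[F] M →ₗ[F] F)
    (hnd : ∀ v : M, (∀ w : M, β v w = 0) → v = 0) {ee : F} (hee : ee = 1 ∨ ee = -1)
    (hs : ∀ p q : M, β q p = ee * β p q)
    {x y : M} (hx : β x x = 0) (hy : β y y = 0) (hxy : β x y ≠ 0) :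
    ∃ g : M ≃ₗ[F] M, (∀ m n : M, β (g m) (g n) = β m n) ∧ g x = y := by
  set c := β x y with hc
  have hyx : β y x = ee * c := hs x y
  set g₀ : M →ₗ[F] M := LinearMap.id
      + ((c⁻¹ • (β.flip y)).smulRight (y - x))
      + (((ee * c⁻¹) • (β.flip x)).smulRight (ee • x - y)) with hg₀
  have happ : ∀ m : M, g₀ m = m + (c⁻¹ * β m y) • (y - x)
      + (ee * c⁻¹ * β m x) • (ee • x - y) := by
    intro m
    simp [hg₀, LinearMap.smulRight_apply, mul_comm]
  have hiso : ∀ m n : M, β (g₀ m) (g₀ n) = β m n := by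
    intro m n
    rw [happ, happ]
    simp only [map_add, map_smul, map_sub, LinearMap.add_apply, LinearMap.sub_apply,
      LinearMap.smul_apply, smul_eq_mul]
    rw [hs n y, hs n x, hyx, hx, hy, ← hc]
    rcases hee with h | h <;> subst h <;> field_simp <;> ring
  have hbij := bijective_of_isometry β hnd g₀ hiso
  refine ⟨LinearEquiv.ofBijective g₀ hbij, hiso, ?_⟩
  show g₀ x = y
  rw [happ, ← hc, hx]
  field_simp
  simp

/-- T1: transitivity on nonzero isotropic vectors. -/
theorem move_isotropic [FiniteDimensional F M] (β : M →ₗ[F] M →ₗ[F] F)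
    (hnd : ∀ v : M, (∀ w : M, β v w = 0) → v = 0) {ee : F} (hee : ee = 1 ∨ ee = -1)
    (hs : ∀ p q : M, β q p = ee * β p q) (h2 : (2 : F) ≠ 0)
    {x y : M} (hx : β x x = 0) (hy : β y y = 0) (hx0 : x ≠ 0) (hy0 : y ≠ 0) :
    ∃ g : M ≃ₗ[F] M, (∀ m n : M, β (g m) (g n) = β m n) ∧ g x = y := by
  rcases ne_or_eq (β x y) 0 with hxy | hxy
  · exact move_isotropic_aux β hnd hee hs hx hy hxy
  · -- find w with β x w ≠ 0 and β y w ≠ 0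
    obtain ⟨w, hw1, hw2⟩ : ∃ w : M, β x w ≠ 0 ∧ β y w ≠ 0 := by
      by_contra hcon
      push_neg at hcon
      obtain ⟨w₁, hw₁⟩ : ∃ w, β x w ≠ 0 := by
        by_contra h; push_neg at h; exact hx0 (hnd x h)
      obtain ⟨w₂, hw₂⟩ : ∃ w, β y w ≠ 0 := by
        by_contra h; push_neg at h; exact hy0 (hnd y h)
      have h1 : β y w₁ = 0 := hcon w₁ hw₁
      have h2' : β x w₂ = 0 := by
        by_contra h; exact hw₂ (hcon w₂ h)
      have h3 : β x (w₁ + w₂) ≠ 0 := by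
        rw [map_add, h2', add_zero]; exact hw₁
      have h4 := hcon _ h3
      rw [map_add, h1, zero_add] at h4
      exact hw₂ h4
    -- u := w + t • x is isotropic, non-orthogonal to both x and y
    set t : F := -(β w w) / (2 * β x w) with ht
    set u : M := w + t • x with hu
    have hxu : β x u = β x w := by
      simp [hu, map_add, map_smul, hx, smul_eq_mul]
    have hyu : β y u = β y w := by
      have hyx0 : β y x = 0 := by rw [hs x y, hxy, mul_zero]
      simp [hu, map_add, map_smul, hyx0, smul_eq_mul]
    have huu : β u u = 0 := by
      have hwx : β w x = ee * β x w := hs x w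
      rcases hee with h | h
      · subst h
        simp only [hu, map_add, map_smul, LinearMap.add_apply, LinearMap.smul_apply,
          smul_eq_mul, hx, hwx, one_mul]
        field_simp [ht]
        have h2xw : (2 : F) * β x w ≠ 0 := mul_ne_zero h2 hw1
        have e : t * (2 * β x w) = -β w w := by rw [ht]; exact div_mul_cancel₀ _ h2xw
        linear_combination e
      · have hww : β w w = 0 := by
          have h5 := hs w w
          rw [h] at h5
          have h6 : 2 * β w w = 0 := by linear_combination h5
          rcases mul_eq_zero.mp h6 with h7 | h7
          · exact absurd h7 h2
          · exact h7
        subst h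
        simp only [hu, map_add, map_smul, LinearMap.add_apply, LinearMap.smul_apply,
          smul_eq_mul, hx, hwx, hww, ht, neg_zero, zero_div, zero_mul, mul_zero]
        ring
    have hxu_ne : β x u ≠ 0 := hxu ▸ hw1
    have hyu_ne : β y u ≠ 0 := hyu ▸ hw2
    have huy_ne : β u y ≠ 0 := by
      rw [hs y u]
      have hee0 : ee ≠ 0 := by
        rcases hee with h | h <;> subst h <;> simp
      exact mul_ne_zero hee0 hyu_ne
    obtain ⟨g₁, hi₁, hv₁⟩ := move_isotropic_aux β hnd hee hs hx huu hxu_ne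
    obtain ⟨g₂, hi₂, hv₂⟩ := move_isotropic_aux β hnd hee hs huu hy huy_ne
    refine ⟨g₁.trans g₂, fun m n => ?_, ?_⟩
    · rw [LinearEquiv.trans_apply, LinearEquiv.trans_apply, hi₂, hi₁]
    · rw [LinearEquiv.trans_apply, hv₁, hv₂]

end WittAux


open Module LinearMap

namespace WittAux

variable {F : Type*} [Field F] {M : Type*} [AddCommGroup M] [Module F M]

theorem exists_partner [FiniteDimensional F M] (β : M →ₗ[F] M →ₗ[F] F)
    (hnd : ∀ v : M, (∀ w : M, β v w = 0) → v = 0) {ee : F} (hee : ee = 1 ∨ ee = -1)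
    (hs : ∀ p q : M, β q p = ee * β p q) (h2 : (2 : F) ≠ 0)
    {x : M} (hx : β x x = 0) (hx0 : x ≠ 0) :
    ∃ f : M, β x f = 1 ∧ β f f = 0 := by
  obtain ⟨w₀, hw₀⟩ : ∃ w, β x w ≠ 0 := by
    by_contra h; push_neg at h; exact hx0 (hnd x h)
  obtain ⟨w, hxw⟩ : ∃ w, β x w = 1 :=
    ⟨(β x w₀)⁻¹ • w₀, by rw [map_smul, smul_eq_mul, inv_mul_cancel₀ hw₀]⟩
  have hwx : β w x = ee := by rw [hs x w, hxw, mul_one]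
  refine ⟨w - (β w w / 2) • x, ?_, ?_⟩
  · rw [map_sub, map_smul, hxw, smul_eq_mul, hx, mul_zero, sub_zero]
  · simp only [map_sub, map_smul, LinearMap.sub_apply, LinearMap.smul_apply,
      smul_eq_mul, hxw, hwx, hx]
    rcases hee with h | h
    · subst h
      field_simp
      ring
    · subst h
      have h6 : 2 * β w w = 0 := by linear_combination (hs w w)
      rcases mul_eq_zero.mp h6 with h7 | h7
      · exact absurd h7 h2
      · rw [h7]; ring
  
/-- Split a totally isotropic subspace along an isotropic vector with hyperbolic partner. -/
theorem split_isotropic [FiniteDimensional F M] (β : LinearMap.BilinForm F M)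
    {ee : F} (hee : ee = 1 ∨ ee = -1) (hs : ∀ p q : M, β q p = ee * β p q)
    (A : Submodule F M) (hA : ∀ p ∈ A, ∀ q ∈ A, β p q = 0)
    {x f : M} (hxA : x ∈ A) (hxf : β x f = 1) (d : ℕ) (hd : finrank F A = d + 1) :
    A = (Submodule.span F {x}) ⊔ (A ⊓ β.orthogonal (Submodule.span F {x, f}))
      ∧ finrank F ↥(A ⊓ β.orthogonal (Submodule.span F {x, f})) = d := by
  have hee0 : ee ≠ 0 := by rcases hee with h | h <;> subst h <;> simp
  have hfx : β f x = ee := by rw [hs x f, hxf, mul_one]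
  have hmemorth : ∀ m : M, m ∈ β.orthogonal (Submodule.span F {x, f})
      ↔ β x m = 0 ∧ β f m = 0 := by
    intro m
    constructor
    · intro hm
      exact ⟨hm x (Submodule.subset_span (by simp)),
        hm f (Submodule.subset_span (by simp))⟩
    · rintro ⟨h1, h2⟩ n hn
      rw [Submodule.mem_span_pair] at hn
      obtain ⟨a, c, rfl⟩ := hn
      show β _ m = 0
      simp [map_add, map_smul, h1, h2]
  -- the functional m ↦ β f m on A
  set φ : ↥A →ₗ[F] F := (β f).comp A.subtype with hφ
  have hker : LinearMap.ker φ = (A ⊓ β.orthogonal (Submodule.span F {x, f})).comap A.subtype := by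
    ext m
    have hm : (m : M) ∈ A := m.2
    rw [LinearMap.mem_ker, Submodule.mem_comap, Submodule.mem_inf, hmemorth]
    simp only [hφ, LinearMap.comp_apply, Submodule.subtype_apply]
    constructor
    · intro h; exact ⟨hm, hA x hxA m hm, h⟩
    · rintro ⟨-, -, h⟩; exact h
  have hsurj : Function.Surjective φ := by
    intro c
    refine ⟨(c * ee⁻¹) • ⟨x, hxA⟩, ?_⟩
    simp only [hφ, map_smul, LinearMap.comp_apply, Submodule.subtype_apply, smul_eq_mul]
    rw [hfx]
    field_simp
  have hrank : finrank F ↥(A ⊓ β.orthogonal (Submodule.span F {x, f})) = d := by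
    have h1 := LinearMap.finrank_range_add_finrank_ker φ
    have h2 : LinearMap.range φ = ⊤ := LinearMap.range_eq_top.mpr hsurj
    rw [h2] at h1
    simp only [finrank_top, finrank_self] at h1
    have h3 : finrank F ↥(LinearMap.ker φ)
        = finrank F ↥(A ⊓ β.orthogonal (Submodule.span F {x, f})) := by
      rw [hker]
      exact LinearEquiv.finrank_eq (Submodule.comapSubtypeEquivOfLe inf_le_left)
    rw [h3, hd] at h1
    omega
  refine ⟨le_antisymm ?_ ?_, hrank⟩
  · intro m hm
    have hdecomp : m = (β f m * ee⁻¹) • x + (m - (β f m * ee⁻¹) • x) := by abel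
    rw [hdecomp]
    apply Submodule.add_mem
    · exact Submodule.mem_sup_left (Submodule.smul_mem _ _ (Submodule.mem_span_singleton_self x))
    · apply Submodule.mem_sup_right
      rw [Submodule.mem_inf]
      constructor
      · exact Submodule.sub_mem _ hm (Submodule.smul_mem _ _ hxA)
      · rw [hmemorth]
        constructor
        · rw [map_sub, map_smul, smul_eq_mul, hA x hxA m hm, hA x hxA x hxA, mul_zero, sub_zero]
        · rw [map_sub, map_smul, smul_eq_mul, hfx]
          field_simp
          simp
  · apply sup_le
    · rw [Submodule.span_le, Set.singleton_subset_iff]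
      exact hxA
    · exact inf_le_left

end WittAux


open Module LinearMap

namespace WittAux

universe u

variable {F : Type*} [Field F]

theorem move_totally_isotropic {ee : F} (hee : ee = 1 ∨ ee = -1) (h2 : (2 : F) ≠ 0) (d : ℕ) :
    ∀ (M : Type u) [AddCommGroup M] [Module F M] [FiniteDimensional F M]
      (β : LinearMap.BilinForm F M)
      (_ : ∀ v : M, (∀ w : M, β v w = 0) → v = 0)
      (_ : ∀ p q : M, β q p = ee * β p q)
      (A A' : Submodule F M)
      (_ : ∀ p ∈ A, ∀ q ∈ A, β p q = 0)
      (_ : ∀ p ∈ A', ∀ q ∈ A', β p q = 0)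
      (_ : finrank F ↥A = d) (_ : finrank F ↥A' = d),
    ∃ g : M ≃ₗ[F] M, (∀ m n : M, β (g m) (g n) = β m n)
      ∧ A.map (g : M →ₗ[F] M) = A' := by
  induction d with
  | zero =>
    intro M _ _ _ β hnd hs A A' hA hA' hdA hdA'
    have hAbot : A = ⊥ := Submodule.finrank_eq_zero.mp hdA
    have hA'bot : A' = ⊥ := Submodule.finrank_eq_zero.mp hdA'
    refine ⟨LinearEquiv.refl F M, fun m n => rfl, ?_⟩
    rw [hAbot, hA'bot, Submodule.map_bot]
  | succ d ih =>
    intro M _ _ _ β hnd hs A A' hA hA' hdA hdA'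
    have hee0 : ee ≠ 0 := by rcases hee with h | h <;> subst h <;> simp
    have hrefl : β.IsRefl := by
      intro p q h
      rw [hs p q, h, mul_zero]
    have hndB : β.Nondegenerate := (LinearMap.IsRefl.nondegenerate_iff_separatingLeft hrefl).mpr hnd
    -- pick nonzero isotropic vectors
    obtain ⟨x, hxA, hx0⟩ := Submodule.exists_mem_ne_zero_of_ne_bot
      (fun h => by rw [h, finrank_bot] at hdA; omega : A ≠ ⊥)
    obtain ⟨x', hx'A', hx'0⟩ := Submodule.exists_mem_ne_zero_of_ne_bot
      (fun h => by rw [h, finrank_bot] at hdA'; omega : A' ≠ ⊥)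
    -- move x to x'
    obtain ⟨g₀, hg₀iso, hg₀x⟩ := move_isotropic β hnd hee hs h2
      (hA x hxA x hxA) (hA' x' hx'A' x' hx'A') hx0 hx'0
    set A'' : Submodule F M := A.map (g₀ : M →ₗ[F] M) with hA''def
    have hA''iso : ∀ p ∈ A'', ∀ q ∈ A'', β p q = 0 := by
      rintro p hp q hq
      obtain ⟨p₀, hp₀, rfl⟩ := hp
      obtain ⟨q₀, hq₀, rfl⟩ := hq
      simp only [LinearEquiv.coe_coe]
      rw [hg₀iso]
      exact hA p₀ hp₀ q₀ hq₀
    have hdA'' : finrank F ↥A'' = d + 1 := by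
      rw [hA''def, LinearEquiv.finrank_map_eq g₀ A]
      exact hdA
    have hx'A'' : x' ∈ A'' := ⟨x, hxA, hg₀x⟩
    -- hyperbolic partner of x'
    obtain ⟨f, hx'f, hff⟩ := exists_partner β hnd hee hs h2 (hA' x' hx'A' x' hx'A') hx'0
    set P : Submodule F M := Submodule.span F {x', f} with hPdef
    have hfx' : β f x' = ee := by rw [hs x' f, hx'f, mul_one]
    have hx'x' : β x' x' = 0 := hA' x' hx'A' x' hx'A'
    -- restriction to P is nondegenerate
    have hPnd : (β.restrict P).Nondegenerate := by
      refine (LinearMap.IsRefl.nondegenerate_iff_separatingLeft (B := β.restrict P) (fun p q h => hrefl _ _ h)).mpr ?_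
      rintro ⟨m, hm⟩ hmz
      obtain ⟨a, c, hac⟩ := Submodule.mem_span_pair.mp hm
      have h1 : β m f = 0 := hmz ⟨f, Submodule.subset_span (by simp)⟩
      have h2' : β m x' = 0 := hmz ⟨x', Submodule.subset_span (by simp)⟩
      rw [← hac] at h1 h2'
      simp only [map_add, map_smul, LinearMap.add_apply, LinearMap.smul_apply,
        smul_eq_mul, hx'f, hff, mul_one, mul_zero, add_zero] at h1
      simp only [map_add, map_smul, LinearMap.add_apply, LinearMap.smul_apply,
        smul_eq_mul, hx'x', hfx', mul_zero, zero_add] at h2'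
      have hc : c = 0 := by
        rcases mul_eq_zero.mp h2' with h | h
        · exact h
        · exact absurd h hee0
      apply Subtype.ext
      simp only [Submodule.coe_zero]
      rw [← hac, h1, hc]
      simp
    have hc : IsCompl P (β.orthogonal P) :=
      LinearMap.BilinForm.isCompl_orthogonal_of_restrict_nondegenerate hrefl hPnd
    set Q : Submodule F M := β.orthogonal P with hQdef
    have horthQ : β.orthogonal Q = P :=
      LinearMap.BilinForm.orthogonal_orthogonal hndB hrefl P
    have hQnd : (β.restrict Q).Nondegenerate := by
      apply LinearMap.BilinForm.nondegenerate_restrict_of_disjoint_orthogonal β hrefl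
      rw [horthQ]
      exact hc.disjoint.symm
    -- split A'' and A'
    obtain ⟨hsplit'', hrank''⟩ := split_isotropic β hee hs A'' hA''iso hx'A'' hx'f d hdA''
    obtain ⟨hsplit', hrank'⟩ := split_isotropic β hee hs A' hA' hx'A' hx'f d hdA'
    -- restricted data on Q
    set β₁ : LinearMap.BilinForm F ↥Q := β.restrict Q with hβ₁def
    have hnd₁ : ∀ v : ↥Q, (∀ w : ↥Q, β₁ v w = 0) → v = 0 := hQnd.1
    have hs₁ : ∀ p q : ↥Q, β₁ q p = ee * β₁ p q := fun p q => hs p q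
    set Am2 : Submodule F ↥Q := (A'' ⊓ Q).comap Q.subtype with hAm2def
    set Am1 : Submodule F ↥Q := (A' ⊓ Q).comap Q.subtype with hAm1def
    have hAm2iso : ∀ p ∈ Am2, ∀ q ∈ Am2, β₁ p q = 0 := by
      rintro p hp q hq
      exact hA''iso p (Submodule.mem_comap.mp hp).1 q (Submodule.mem_comap.mp hq).1
    have hAm1iso : ∀ p ∈ Am1, ∀ q ∈ Am1, β₁ p q = 0 := by
      rintro p hp q hq
      exact hA' p (Submodule.mem_comap.mp hp).1 q (Submodule.mem_comap.mp hq).1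
    have hrankAm2 : finrank F ↥Am2 = d := by
      rw [hAm2def]
      rw [LinearEquiv.finrank_eq (Submodule.comapSubtypeEquivOfLe inf_le_right)]
      exact hrank''
    have hrankAm1 : finrank F ↥Am1 = d := by
      rw [hAm1def]
      rw [LinearEquiv.finrank_eq (Submodule.comapSubtypeEquivOfLe inf_le_right)]
      exact hrank'
    obtain ⟨h₁, hh₁iso, hh₁map⟩ := ih ↥Q β₁ hnd₁ hs₁ Am2 Am1 hAm2iso hAm1iso hrankAm2 hrankAm1
    have hα : ∀ p q : ↥Q, β (h₁ p) (h₁ q) = β (p : M) q := hh₁iso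
    obtain ⟨g', hg'iso, hg'Q, hg'P⟩ := extend_isometry β hrefl Q hQnd h₁ hα
    -- g' maps A'' to A'
    have hmapinf : (A'' ⊓ Q).map (g' : M →ₗ[F] M) = A' ⊓ Q := by
      have h1 : A'' ⊓ Q = Am2.map Q.subtype := by
        rw [hAm2def, Submodule.map_comap_subtype]
        exact (le_inf inf_le_right le_rfl).antisymm inf_le_right
      have h2 : A' ⊓ Q = Am1.map Q.subtype := by
        rw [hAm1def, Submodule.map_comap_subtype]
        exact (le_inf inf_le_right le_rfl).antisymm inf_le_right
      rw [h1, h2, ← hh₁map, ← Submodule.map_comp, ← Submodule.map_comp]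
      congr 1
      ext z
      simp only [LinearMap.comp_apply, Submodule.subtype_apply, LinearEquiv.coe_coe]
      rw [hg'Q z]
    have hx'P : x' ∈ P := Submodule.subset_span (by simp)
    have hg'x' : g' x' = x' := hg'P x' (horthQ ▸ hx'P)
    have hmapA'' : A''.map (g' : M →ₗ[F] M) = A' := by
      rw [hsplit'', Submodule.map_sup, hmapinf, Submodule.map_span,
        Set.image_singleton, LinearEquiv.coe_coe, hg'x', ← hsplit']
    refine ⟨g₀.trans g', fun m n => ?_, ?_⟩
    · rw [LinearEquiv.trans_apply, LinearEquiv.trans_apply, hg'iso, hg₀iso]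
    · rw [show ((g₀.trans g' : M ≃ₗ[F] M) : M →ₗ[F] M)
          = (g' : M →ₗ[F] M) ∘ₗ (g₀ : M →ₗ[F] M) from rfl,
        Submodule.map_comp, ← hA''def, hmapA'']

end WittAux


open Module LinearMap

namespace WittAux

variable {F : Type*} [Field F] {M : Type*} [AddCommGroup M] [Module F M]

section Lag

variable [FiniteDimensional F M] (β : LinearMap.BilinForm F M)

/-- The hyperbolic form on M × M. -/
noncomputable def Bprod : LinearMap.BilinForm F (M × M) :=
  β.compl₁₂ (LinearMap.fst F M M) (LinearMap.fst F M M)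
    - β.compl₁₂ (LinearMap.snd F M M) (LinearMap.snd F M M)

theorem Bprod_apply (p q : M × M) : Bprod β p q = β p.1 q.1 - β p.2 q.2 := by
  simp [Bprod, LinearMap.compl₁₂_apply, LinearMap.sub_apply]

theorem Bprod_nondeg (hnd : ∀ v : M, (∀ w : M, β v w = 0) → v = 0) :
    ∀ p : M × M, (∀ q : M × M, Bprod β p q = 0) → p = 0 := by
  intro p hp
  have h1 : p.1 = 0 := by
    apply hnd
    intro w
    have := hp (w, 0)
    rw [Bprod_apply] at this
    simpa using this
  have h2 : p.2 = 0 := by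
    apply hnd
    intro w
    have := hp (0, w)
    rw [Bprod_apply] at this
    simp only [map_zero, LinearMap.zero_apply, zero_sub, neg_eq_zero] at this
    exact this
  exact Prod.ext h1 h2

theorem Bprod_symm {ee : F} (hs : ∀ p q : M, β q p = ee * β p q) :
    ∀ p q : M × M, Bprod β q p = ee * Bprod β p q := by
  intro p q
  rw [Bprod_apply, Bprod_apply, hs p.1 q.1, hs p.2 q.2]
  ring

/-- Structure theory of Lagrangian subspaces of (M × M, β ⊖ β). -/
theorem lag_struct (hnd : ∀ v : M, (∀ w : M, β v w = 0) → v = 0)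
    {ee : F} (hs : ∀ p q : M, β q p = ee * β p q)
    (U : Submodule F (M × M))
    (hUiso : ∀ u ∈ U, ∀ u' ∈ U, β u.1 u'.1 - β u.2 u'.2 = 0)
    (hUrank : finrank F ↥U = finrank F M) :
    ((Bprod β).orthogonal U = U)
    ∧ (∀ v : M, (v, 0) ∈ U ↔ ∀ u ∈ U, β u.1 v = 0)
    ∧ (∀ w : M, (0, w) ∈ U ↔ ∀ u ∈ U, β u.2 w = 0)
    ∧ β.orthogonal (U.comap (LinearMap.inl F M M)) = U.map (LinearMap.fst F M M)
    ∧ β.orthogonal (U.comap (LinearMap.inr F M M)) = U.map (LinearMap.snd F M M)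
    ∧ finrank F ↥(U.comap (LinearMap.inl F M M)) = finrank F ↥(U.comap (LinearMap.inr F M M)) := by
  have hrefl : β.IsRefl := fun p q h => by rw [hs p q, h, mul_zero]
  have hBrefl : (Bprod β).IsRefl := fun p q h => by rw [Bprod_symm β hs p q, h, mul_zero]
  have hBnd : (Bprod β).Nondegenerate := (LinearMap.IsRefl.nondegenerate_iff_separatingLeft hBrefl).mpr (Bprod_nondeg β hnd)
  have hndB : β.Nondegenerate := (LinearMap.IsRefl.nondegenerate_iff_separatingLeft hrefl).mpr hnd
  have hprodrank : finrank F (M × M) = finrank F M + finrank F M := Module.finrank_prod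
  have horthU : (Bprod β).orthogonal U = U := by
    have le1 : U ≤ (Bprod β).orthogonal U := by
      intro u hu
      intro n hn
      show Bprod β n u = 0
      rw [Bprod_apply]
      exact hUiso n hn u hu
    have hd : finrank F ↥((Bprod β).orthogonal U) = finrank F M := by
      rw [LinearMap.BilinForm.finrank_orthogonal hBnd U, hprodrank, hUrank]
      omega
    exact (Submodule.eq_of_le_of_finrank_le le1 (by rw [hd, hUrank])).symm
  have c1 : ∀ v : M, (v, 0) ∈ U ↔ ∀ u ∈ U, β u.1 v = 0 := by
    intro v
    constructor
    · intro hv u hu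
      rw [← horthU] at hv
      have := hv u hu
      rw [Bprod_apply] at this
      simpa using this
    · intro hv
      rw [← horthU]
      intro u hu
      rw [Bprod_apply]
      simp [hv u hu]
  have c2 : ∀ w : M, (0, w) ∈ U ↔ ∀ u ∈ U, β u.2 w = 0 := by
    intro w
    constructor
    · intro hv u hu
      rw [← horthU] at hv
      have := hv u hu
      rw [Bprod_apply] at this
      simp only [map_zero, LinearMap.zero_apply, zero_sub, neg_eq_zero, sub_eq_zero] at this
      exact this
    · intro hv
      rw [← horthU]
      intro u hu
      rw [Bprod_apply]
      simp [hv u hu]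
  have hAU : U.comap (LinearMap.inl F M M) = β.orthogonal (U.map (LinearMap.fst F M M)) := by
    ext v
    rw [Submodule.mem_comap]
    rw [show (LinearMap.inl F M M) v = (v, 0) from rfl, c1]
    constructor
    · intro h n hn
      obtain ⟨u, hu, rfl⟩ := hn
      exact h u hu
    · intro h u hu
      exact h u.1 ⟨u, hu, rfl⟩
  have hCU : U.comap (LinearMap.inr F M M) = β.orthogonal (U.map (LinearMap.snd F M M)) := by
    ext w
    rw [Submodule.mem_comap]
    rw [show (LinearMap.inr F M M) w = (0, w) from rfl, c2]
    constructor
    · intro h n hn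
      obtain ⟨u, hu, rfl⟩ := hn
      exact h u hu
    · intro h u hu
      exact h u.2 ⟨u, hu, rfl⟩
  have horthAU : β.orthogonal (U.comap (LinearMap.inl F M M)) = U.map (LinearMap.fst F M M) := by
    rw [hAU, LinearMap.BilinForm.orthogonal_orthogonal hndB hrefl]
  have horthCU : β.orthogonal (U.comap (LinearMap.inr F M M)) = U.map (LinearMap.snd F M M) := by
    rw [hCU, LinearMap.BilinForm.orthogonal_orthogonal hndB hrefl]
  refine ⟨horthU, c1, c2, horthAU, horthCU, ?_⟩
  -- dimensions
  have hAUdim : finrank F ↥(U.comap (LinearMap.inl F M M))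
      = finrank F M - finrank F ↥(U.map (LinearMap.fst F M M)) := by
    rw [hAU, LinearMap.BilinForm.finrank_orthogonal hndB]
  -- rank-nullity for fst on U
  have hCUdim : finrank F ↥(U.comap (LinearMap.inr F M M))
      = finrank F M - finrank F ↥(U.map (LinearMap.fst F M M)) := by
    set φ : ↥U →ₗ[F] M := (LinearMap.fst F M M).comp U.subtype with hφ
    have hrange : LinearMap.range φ = U.map (LinearMap.fst F M M) := by
      rw [hφ, LinearMap.range_comp, Submodule.range_subtype]
    have hkermap : (LinearMap.ker φ).map U.subtype
        = U ⊓ (Submodule.snd F M M) := by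
      ext p
      simp only [Submodule.mem_map, LinearMap.mem_ker, Submodule.mem_inf]
      constructor
      · rintro ⟨u, hu, rfl⟩
        refine ⟨u.2, ?_⟩
        show (u : M × M).1 ∈ (⊥ : Submodule F M)
        simp only [hφ, LinearMap.comp_apply, Submodule.subtype_apply] at hu
        exact (Submodule.mem_bot F).mpr hu
      · rintro ⟨hp, hp2⟩
        have h1 : p.1 = 0 := (Submodule.mem_bot F).mp hp2
        exact ⟨⟨p, hp⟩, by simp [hφ, h1], rfl⟩
    have hkerdim : finrank F ↥(LinearMap.ker φ) = finrank F ↥(U ⊓ Submodule.snd F M M) := by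
      rw [← hkermap]
      exact (Submodule.equivMapOfInjective U.subtype (Submodule.injective_subtype U)
        (LinearMap.ker φ)).finrank_eq
    have hCUmap : (U.comap (LinearMap.inr F M M)).map (LinearMap.inr F M M)
        = U ⊓ (Submodule.snd F M M) := by
      ext p
      simp only [Submodule.mem_map, Submodule.mem_comap, Submodule.mem_inf]
      constructor
      · rintro ⟨y, hy, rfl⟩
        exact ⟨hy, rfl⟩
      · rintro ⟨hp, hp2⟩
        have h1 : p.1 = 0 := (Submodule.mem_bot F).mp hp2
        refine ⟨p.2, ?_, ?_⟩
        · rw [show (LinearMap.inr F M M) p.2 = (0, p.2) from rfl, ← h1]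
          exact hp
        · rw [show (LinearMap.inr F M M) p.2 = (0, p.2) from rfl, ← h1]
      
    have hCUdim' : finrank F ↥(U.comap (LinearMap.inr F M M))
        = finrank F ↥(U ⊓ Submodule.snd F M M) := by
      rw [← hCUmap]
      exact (Submodule.equivMapOfInjective (LinearMap.inr F M M) LinearMap.inr_injective
        (U.comap (LinearMap.inr F M M))).finrank_eq
    have hrn := LinearMap.finrank_range_add_finrank_ker φ
    rw [hrange, hkerdim, hUrank] at hrn
    rw [hCUdim']
    omega
  rw [hAUdim, hCUdim]

end Lag

end WittAux


open Module LinearMap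

namespace WittAux

variable {F : Type*} [Field F] {M : Type*} [AddCommGroup M] [Module F M]

/-- An isotropic subspace has a complement inside its orthogonal on which the form
is nondegenerate. -/
theorem compl_pieces [FiniteDimensional F M] (β : LinearMap.BilinForm F M)
    (hnd : ∀ v : M, (∀ w : M, β v w = 0) → v = 0)
    (hrefl : β.IsRefl) (A : Submodule F M) (hAiso : ∀ p ∈ A, ∀ q ∈ A, β p q = 0) :
    ∃ V₀ : Submodule F M, V₀ ≤ β.orthogonal A ∧ A ⊓ V₀ = ⊥ ∧ A ⊔ V₀ = β.orthogonal A
      ∧ (β.restrict V₀).Nondegenerate := by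
  have hndB : β.Nondegenerate := (LinearMap.IsRefl.nondegenerate_iff_separatingLeft hrefl).mpr hnd
  have hAle : A ≤ β.orthogonal A := by
    intro a ha n hn
    exact hAiso n hn a ha
  set Q := β.orthogonal A with hQ
  set Ain : Submodule F ↥Q := A.comap Q.subtype with hAin
  obtain ⟨V₀s, hV₀s⟩ := Submodule.exists_isCompl Ain
  set V₀ : Submodule F M := V₀s.map Q.subtype with hV₀
  have hV₀le : V₀ ≤ Q := by
    rw [hV₀]
    rintro x ⟨y, hy, rfl⟩
    exact y.2
  have hmapAin : Ain.map Q.subtype = A := by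
    rw [hAin, Submodule.map_comap_subtype]
    exact inf_eq_right.mpr hAle
  have hdisj : A ⊓ V₀ = ⊥ := by
    rw [eq_bot_iff]
    intro x hx
    obtain ⟨hxA, hxV⟩ := Submodule.mem_inf.mp hx
    obtain ⟨y, hy, rfl⟩ := hxV
    have hyAin : y ∈ Ain := by
      rw [hAin, Submodule.mem_comap]
      exact hxA
    have : y ∈ Ain ⊓ V₀s := Submodule.mem_inf.mpr ⟨hyAin, hy⟩
    rw [hV₀s.inf_eq_bot] at this
    have hy0 : y = 0 := (Submodule.mem_bot F).mp this
    simp [hy0]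
  have hsup : A ⊔ V₀ = Q := by
    rw [← hmapAin, hV₀, ← Submodule.map_sup, hV₀s.sup_eq_top]
    simp [Submodule.range_subtype]
  have hnd₀ : (β.restrict V₀).Nondegenerate := by
    refine (LinearMap.IsRefl.nondegenerate_iff_separatingLeft (B := β.restrict V₀) (fun p q h => hrefl _ _ h)).mpr ?_
    rintro ⟨v, hv⟩ hz
    have hvQ : v ∈ Q := hV₀le hv
    have hall : ∀ n ∈ Q, β v n = 0 := by
      intro n hn
      rw [← hsup] at hn
      obtain ⟨a, ha, u, hu, rfl⟩ := Submodule.mem_sup.mp hn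
      have h1 : β v a = 0 := hrefl _ _ (hvQ a ha)
      have h2 : β v u = 0 := hz ⟨u, hu⟩
      rw [map_add, h1, h2, add_zero]
    have hvA : v ∈ A := by
      rw [← LinearMap.BilinForm.orthogonal_orthogonal hndB hrefl A, ← hQ]
      intro n hn
      exact hrefl _ _ (hall n hn)
    have : v ∈ A ⊓ V₀ := Submodule.mem_inf.mpr ⟨hvA, hv⟩
    rw [hdisj] at this
    exact Subtype.ext ((Submodule.mem_bot F).mp this)
  exact ⟨V₀, hV₀le, hdisj, hsup, hnd₀⟩

/-- Extract a linear "graph section" of a Lagrangian relation. -/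
theorem graph_map (U : Submodule F (M × M)) (A C V₀ V₂ : Submodule F M)
    (hU1 : ∀ v : M, (v, 0) ∈ U ↔ v ∈ A)
    (hU2 : ∀ w : M, (0, w) ∈ U ↔ w ∈ C)
    (hV₀P : ∀ v ∈ V₀, ∃ w, (v, w) ∈ U)
    (hCV₂ : C ⊓ V₂ = ⊥)
    (hdecomp : ∀ v w : M, (v, w) ∈ U → ∃ c ∈ C, ∃ u ∈ V₂, w = c + u) :
    ∃ s : ↥V₀ →ₗ[F] M, ∀ x : ↥V₀, ((x : M), s x) ∈ U ∧ s x ∈ V₂ := by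
  set G : Submodule F (M × M) := U ⊓ (V₀.prod V₂) with hG
  have hGmem : ∀ g : ↥G, (g : M × M) ∈ U ∧ (g : M × M).1 ∈ V₀ ∧ (g : M × M).2 ∈ V₂ := by
    rintro ⟨g, hg⟩
    obtain ⟨h1, h2⟩ := Submodule.mem_inf.mp hg
    exact ⟨h1, (Submodule.mem_prod.mp h2).1, (Submodule.mem_prod.mp h2).2⟩
  set e₁ : ↥G →ₗ[F] ↥V₀ := LinearMap.codRestrict V₀ ((LinearMap.fst F M M).comp G.subtype)
    (fun g => (hGmem g).2.1) with he₁
  have hbij : Function.Bijective e₁ := by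
    constructor
    · intro g g' hgg
      have h1 : (g : M × M).1 = (g' : M × M).1 := by
        have := congrArg (Subtype.val) hgg
        exact this
      have h2 : ((g : M × M) - (g' : M × M)) = (0, (g : M × M).2 - (g' : M × M).2) := by
        rw [Prod.ext_iff]
        constructor
        · simp [h1]
        · simp
      have hsub : ((g : M × M) - (g' : M × M)) ∈ U :=
        Submodule.sub_mem U (hGmem g).1 (hGmem g').1
      rw [h2] at hsub
      have hC : (g : M × M).2 - (g' : M × M).2 ∈ C := (hU2 _).mp hsub
      have hV : (g : M × M).2 - (g' : M × M).2 ∈ V₂ :=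
        Submodule.sub_mem V₂ (hGmem g).2.2 (hGmem g').2.2
      have : (g : M × M).2 - (g' : M × M).2 ∈ C ⊓ V₂ := Submodule.mem_inf.mpr ⟨hC, hV⟩
      rw [hCV₂] at this
      have h3 : (g : M × M).2 = (g' : M × M).2 := by
        have := (Submodule.mem_bot F).mp this
        rw [sub_eq_zero] at this
        exact this
      apply Subtype.ext
      exact Prod.ext h1 h3
    · rintro ⟨v, hv⟩
      obtain ⟨w, hw⟩ := hV₀P v hv
      obtain ⟨c, hc, u, hu, rfl⟩ := hdecomp v w hw
      have hvu : (v, u) ∈ U := by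
        have h0c : ((0 : M), c) ∈ U := (hU2 c).mpr hc
        have := Submodule.sub_mem U hw h0c
        simpa using this
      have hmem : (v, u) ∈ G := Submodule.mem_inf.mpr ⟨hvu, Submodule.mem_prod.mpr ⟨hv, hu⟩⟩
      exact ⟨⟨(v, u), hmem⟩, rfl⟩
  set eqv := LinearEquiv.ofBijective e₁ hbij with heqv
  refine ⟨((LinearMap.snd F M M).comp G.subtype).comp (eqv.symm : ↥V₀ →ₗ[F] ↥G), ?_⟩
  intro x
  set g : ↥G := eqv.symm x with hgdef
  have hgx : e₁ g = x := eqv.apply_symm_apply x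
  have h1 : (g : M × M).1 = (x : M) := by
    have := congrArg Subtype.val hgx
    exact this
  have hsx : ((LinearMap.snd F M M).comp G.subtype).comp (eqv.symm : ↥V₀ →ₗ[F] ↥G) x
      = (g : M × M).2 := rfl
  rw [hsx]
  constructor
  · have : ((x : M), (g : M × M).2) = (g : M × M) := by
      rw [Prod.ext_iff]
      exact ⟨h1.symm, rfl⟩
    rw [this]
    exact (hGmem g).1
  · exact (hGmem g).2.2

end WittAux


/-- Assume `char K ≠ 2`.  Let `b` be a nondegenerate reflexive bilinear
form on a finite-dimensional `K`-vector space `V` with `dim_K V = N`, and let `B` be the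
form `B((v₁,v₂),(w₁,w₂)) = b v₁ w₁ - b v₂ w₂` on `V × V`.  If `W` and `W'` are totally
`B`-isotropic subspaces of `V × V` with `dim_K W = dim_K W' = N` and
`dim_K (W ∩ (V × 0)) = dim_K (W' ∩ (V × 0))`, then there exist isometries `g₁, g₂` of `b`
with `(g₁ × g₂)(W) = W'`. -/
theorem isotropic_same_dim_inter_exists_isometries_map
    (K : Type*) [Field K] (hchar : ringChar K ≠ 2)
    (V : Type*) [AddCommGroup V] [Module K V]
    [FiniteDimensional K V] (N : ℕ) (hV : finrank K V = N)
    (b : V →ₗ[K] V →ₗ[K] K)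
    (hb_nondeg : ∀ v : V, (∀ w : V, b v w = 0) → v = 0)
    (hb_refl : ∀ v w : V, b v w = 0 ↔ b w v = 0)
    (W W' : Submodule K (V × V))
    (hW_iso : ∀ w ∈ W, ∀ w' ∈ W, b w.1 w'.1 - b w.2 w'.2 = 0)
    (hW'_iso : ∀ w ∈ W', ∀ w' ∈ W', b w.1 w'.1 - b w.2 w'.2 = 0)
    (hW_dim : finrank K ↥W = N) (hW'_dim : finrank K ↥W' = N)
    (h_inter : finrank K ↥(W ⊓ Submodule.fst K V V)
      = finrank K ↥(W' ⊓ Submodule.fst K V V)) :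
    ∃ g₁ g₂ : V ≃ₗ[K] V,
      (∀ v w : V, b (g₁ v) (g₁ w) = b v w) ∧
      (∀ v w : V, b (g₂ v) (g₂ w) = b v w) ∧
      Submodule.map (LinearMap.prodMap (g₁ : V →ₗ[K] V) (g₂ : V →ₗ[K] V)) W = W' := by
  classical
  obtain ⟨ee, hee, hs⟩ := WittAux.exists_eps hchar b hb_refl
  have h2 : (2 : K) ≠ 0 := Ring.two_ne_zero hchar
  have hrefl : LinearMap.IsRefl b := fun v w h => (hb_refl v w).mp h
  -- Lagrangian structure of W and W'
  obtain ⟨hortW, c1, c2, ho1, ho2, hd12⟩ :=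
    WittAux.lag_struct b hb_nondeg hs W hW_iso (by rw [hW_dim, hV])
  obtain ⟨hortW', c1', c2', ho1', ho2', hd12'⟩ :=
    WittAux.lag_struct b hb_nondeg hs W' hW'_iso (by rw [hW'_dim, hV])
  set AW : Submodule K V := W.comap (LinearMap.inl K V V) with hAWdef
  set CW : Submodule K V := W.comap (LinearMap.inr K V V) with hCWdef
  set A : Submodule K V := W'.comap (LinearMap.inl K V V) with hAdef
  set C : Submodule K V := W'.comap (LinearMap.inr K V V) with hCdef
  have hmemAW : ∀ v : V, v ∈ AW ↔ (v, 0) ∈ W := fun v => Iff.rfl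
  have hmemCW : ∀ v : V, v ∈ CW ↔ ((0 : V), v) ∈ W := fun v => Iff.rfl
  have hmemA : ∀ v : V, v ∈ A ↔ (v, 0) ∈ W' := fun v => Iff.rfl
  have hmemC : ∀ v : V, v ∈ C ↔ ((0 : V), v) ∈ W' := fun v => Iff.rfl
  -- total isotropy of the four kernels
  have hAWiso : ∀ p ∈ AW, ∀ q ∈ AW, b p q = 0 := by
    intro p hp q hq
    have := hW_iso (p, 0) hp (q, 0) hq
    simpa using this
  have hCWiso : ∀ p ∈ CW, ∀ q ∈ CW, b p q = 0 := by
    intro p hp q hq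
    have := hW_iso (0, p) hp (0, q) hq
    simp only [map_zero, LinearMap.zero_apply, zero_sub, neg_eq_zero] at this
    exact this
  have hAiso : ∀ p ∈ A, ∀ q ∈ A, b p q = 0 := by
    intro p hp q hq
    have := hW'_iso (p, 0) hp (q, 0) hq
    simpa using this
  have hCiso : ∀ p ∈ C, ∀ q ∈ C, b p q = 0 := by
    intro p hp q hq
    have := hW'_iso (0, p) hp (0, q) hq
    simp only [map_zero, LinearMap.zero_apply, zero_sub, neg_eq_zero] at this
    exact this
  -- dimension identification with W ⊓ fst
  have hfindim : ∀ (U : Submodule K (V × V)),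
      finrank K ↥(U.comap (LinearMap.inl K V V)) = finrank K ↥(U ⊓ Submodule.fst K V V) := by
    intro U
    have hmap : (U.comap (LinearMap.inl K V V)).map (LinearMap.inl K V V)
        = U ⊓ Submodule.fst K V V := by
      ext p
      simp only [Submodule.mem_map, Submodule.mem_inf, Submodule.mem_comap]
      constructor
      · rintro ⟨v, hv, rfl⟩
        exact ⟨hv, (Submodule.mem_bot K).mpr rfl⟩
      · rintro ⟨hp, hp2⟩
        have h1 : p.2 = 0 := (Submodule.mem_bot K).mp hp2
        refine ⟨p.1, ?_, ?_⟩
        · rw [show (LinearMap.inl K V V) p.1 = (p.1, 0) from rfl, ← h1]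
          exact hp
        · rw [show (LinearMap.inl K V V) p.1 = (p.1, 0) from rfl, ← h1]
    rw [← hmap]
    exact (Submodule.equivMapOfInjective (LinearMap.inl K V V) LinearMap.inl_injective
      (U.comap (LinearMap.inl K V V))).finrank_eq
  have hAWA : finrank K ↥AW = finrank K ↥A := by
    rw [hAWdef, hAdef, hfindim W, hfindim W', h_inter]
  have hCWC : finrank K ↥CW = finrank K ↥C := by
    rw [hCWdef, ← hd12, hCdef, ← hd12', hAWA]
  -- move CW to C and AW to A
  obtain ⟨g₂, hg₂iso, hg₂map⟩ := WittAux.move_totally_isotropic hee h2 (finrank K ↥CW)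
    V b hb_nondeg hs CW C hCWiso hCiso rfl hCWC.symm
  obtain ⟨ga, hgaiso, hgamap⟩ := WittAux.move_totally_isotropic hee h2 (finrank K ↥AW)
    V b hb_nondeg hs AW A hAWiso hAiso rfl hAWA.symm
  -- the moved Lagrangian U
  set pm : (V × V) →ₗ[K] V × V :=
    LinearMap.prodMap (ga : V →ₗ[K] V) (g₂ : V →ₗ[K] V) with hpmdef
  set U : Submodule K (V × V) := W.map pm with hUdef
  have hpmapp : ∀ p : V × V, pm p = (ga p.1, g₂ p.2) := fun p => rfl
  have hUiso : ∀ u ∈ U, ∀ u' ∈ U, b u.1 u'.1 - b u.2 u'.2 = 0 := by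
    rintro u hu u' hu'
    obtain ⟨p, hp, rfl⟩ := hu
    obtain ⟨q, hq, rfl⟩ := hu'
    rw [hpmapp, hpmapp]
    simp only
    rw [hgaiso, hg₂iso]
    exact hW_iso p hp q hq
  have hUrank : finrank K ↥U = N := by
    have hE : U = W.map ((ga.prodCongr g₂ : (V × V) ≃ₗ[K] V × V) : (V × V) →ₗ[K] V × V) := rfl
    rw [hE, LinearEquiv.finrank_map_eq]
    exact hW_dim
  obtain ⟨hortU, c1U, c2U, ho1U, ho2U, hd12U⟩ :=
    WittAux.lag_struct b hb_nondeg hs U hUiso (by rw [hUrank, hV])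
  -- kernels of U
  have hU1 : ∀ v : V, (v, 0) ∈ U ↔ v ∈ A := by
    intro v
    constructor
    · rintro ⟨p, hp, heq⟩
      rw [hpmapp] at heq
      have h1 : ga p.1 = v := congrArg Prod.fst heq
      have h2 : g₂ p.2 = 0 := congrArg Prod.snd heq
      have h2' : p.2 = 0 := by
        apply g₂.injective
        simpa using h2
      have hp1 : p.1 ∈ AW := by
        rw [hmemAW]
        rw [show ((p.1 : V), (0 : V)) = p from by rw [← h2']]
        exact hp
      rw [← h1, ← hgamap]
      exact ⟨p.1, hp1, rfl⟩
    · intro hv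
      rw [← hgamap] at hv
      obtain ⟨a, ha, rfl⟩ := hv
      refine ⟨(a, 0), (hmemAW a).mp ha, ?_⟩
      rw [hpmapp]
      simp
  have hU2 : ∀ w : V, ((0 : V), w) ∈ U ↔ w ∈ C := by
    intro w
    constructor
    · rintro ⟨p, hp, heq⟩
      rw [hpmapp] at heq
      have h1 : ga p.1 = 0 := congrArg Prod.fst heq
      have h2 : g₂ p.2 = w := congrArg Prod.snd heq
      have h1' : p.1 = 0 := by
        apply ga.injective
        simpa using h1
      have hp2 : p.2 ∈ CW := by
        rw [hmemCW]
        rw [show ((0 : V), (p.2 : V)) = p from by rw [← h1']]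
        exact hp
      rw [← h2, ← hg₂map]
      exact ⟨p.2, hp2, rfl⟩
    · intro hw
      rw [← hg₂map] at hw
      obtain ⟨cw, hcw, rfl⟩ := hw
      refine ⟨(0, cw), (hmemCW cw).mp hcw, ?_⟩
      rw [hpmapp]
      simp
  have hcomapU1 : U.comap (LinearMap.inl K V V) = A := by
    ext v
    rw [Submodule.mem_comap, show (LinearMap.inl K V V) v = (v, 0) from rfl, hU1]
  have hcomapU2 : U.comap (LinearMap.inr K V V) = C := by
    ext w
    rw [Submodule.mem_comap, show (LinearMap.inr K V V) w = ((0 : V), w) from rfl, hU2]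
  -- projections are orthogonals of kernels
  have hfstU : U.map (LinearMap.fst K V V) = LinearMap.BilinForm.orthogonal b A := by rw [← ho1U, hcomapU1]
  have hsndU : U.map (LinearMap.snd K V V) = LinearMap.BilinForm.orthogonal b C := by rw [← ho2U, hcomapU2]
  have hfstW' : W'.map (LinearMap.fst K V V) = LinearMap.BilinForm.orthogonal b A := by rw [← ho1', hAdef]
  have hsndW' : W'.map (LinearMap.snd K V V) = LinearMap.BilinForm.orthogonal b C := by rw [← ho2', hCdef]
  -- complements
  obtain ⟨V₀, hV₀le, hAV₀, hAsup, hV₀nd⟩ := WittAux.compl_pieces b hb_nondeg hrefl A hAiso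
  obtain ⟨V₂, hV₂le, hCV₂, hCsup, _⟩ := WittAux.compl_pieces b hb_nondeg hrefl C hCiso
  -- graph sections
  have hV₀P : ∀ v ∈ V₀, ∃ w, (v, w) ∈ U := by
    intro v hv
    have : v ∈ U.map (LinearMap.fst K V V) := by
      rw [hfstU]
      exact hV₀le hv
    obtain ⟨u, hu, rfl⟩ := this
    exact ⟨u.2, hu⟩
  have hV₀P' : ∀ v ∈ V₀, ∃ w, (v, w) ∈ W' := by
    intro v hv
    have : v ∈ W'.map (LinearMap.fst K V V) := by
      rw [hfstW']
      exact hV₀le hv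
    obtain ⟨u, hu, rfl⟩ := this
    exact ⟨u.2, hu⟩
  have hdecomp : ∀ v w : V, (v, w) ∈ U → ∃ c ∈ C, ∃ u ∈ V₂, w = c + u := by
    intro v w hvw
    have : w ∈ U.map (LinearMap.snd K V V) := ⟨(v, w), hvw, rfl⟩
    rw [hsndU, ← hCsup] at this
    obtain ⟨c, hc, u, hu, heq⟩ := Submodule.mem_sup.mp this
    exact ⟨c, hc, u, hu, heq.symm⟩
  have hdecomp' : ∀ v w : V, (v, w) ∈ W' → ∃ c ∈ C, ∃ u ∈ V₂, w = c + u := by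
    intro v w hvw
    have : w ∈ W'.map (LinearMap.snd K V V) := ⟨(v, w), hvw, rfl⟩
    rw [hsndW', ← hCsup] at this
    obtain ⟨c, hc, u, hu, heq⟩ := Submodule.mem_sup.mp this
    exact ⟨c, hc, u, hu, heq.symm⟩
  obtain ⟨s, hsprop⟩ := WittAux.graph_map U A C V₀ V₂ hU1 hU2 hV₀P hCV₂ hdecomp
  obtain ⟨s', hs'prop⟩ := WittAux.graph_map W' A C V₀ V₂ (fun v => (hmemA v).symm)
    (fun w => (hmemC w).symm) hV₀P' hCV₂ hdecomp'
  -- injective codomain restrictions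
  set sc : ↥V₀ →ₗ[K] ↥V₂ := LinearMap.codRestrict V₂ s (fun x => (hsprop x).2) with hscdef
  set sc' : ↥V₀ →ₗ[K] ↥V₂ := LinearMap.codRestrict V₂ s' (fun x => (hs'prop x).2) with hsc'def
  have hinj : ∀ (T : Submodule K (V × V)), (∀ v : V, (v, 0) ∈ T ↔ v ∈ A) →
      ∀ (t : ↥V₀ →ₗ[K] V), (∀ x : ↥V₀, ((x : V), t x) ∈ T) →
      ∀ x y : ↥V₀, t x = t y → x = y := by
    intro T hT1 t ht x y hxy
    have hd : (((x : V) - y, t x - t y) : V × V) ∈ T := by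
      have := Submodule.sub_mem T (ht x) (ht y)
      simpa using this
    rw [hxy, sub_self] at hd
    have h1 : ((x : V) - y) ∈ A := (hT1 _).mp hd
    have h2 : ((x : V) - y) ∈ V₀ := Submodule.sub_mem V₀ x.2 y.2
    have : ((x : V) - y) ∈ A ⊓ V₀ := Submodule.mem_inf.mpr ⟨h1, h2⟩
    rw [hAV₀] at this
    have := (Submodule.mem_bot K).mp this
    exact Subtype.ext (sub_eq_zero.mp this)
  have hscinj : Function.Injective sc := by
    intro x y hxy
    have hval : s x = s y := congrArg Subtype.val hxy
    exact hinj U hU1 s (fun x => (hsprop x).1) x y hval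
  have hsc'inj : Function.Injective sc' := by
    intro x y hxy
    have hval : s' x = s' y := congrArg Subtype.val hxy
    exact hinj W' (fun v => (hmemA v).symm) s' (fun x => (hs'prop x).1) x y hval
  -- dimensions of V₀ and V₂
  have hrkV₀ : finrank K ↥A + finrank K ↥V₀ = finrank K ↥(LinearMap.BilinForm.orthogonal b A) := by
    have := Submodule.finrank_sup_add_finrank_inf_eq A V₀
    rw [hAV₀, hAsup] at this
    simpa using this.symm
  have hrkV₂ : finrank K ↥C + finrank K ↥V₂ = finrank K ↥(LinearMap.BilinForm.orthogonal b C) := by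
    have := Submodule.finrank_sup_add_finrank_inf_eq C V₂
    rw [hCV₂, hCsup] at this
    simpa using this.symm
  have hndb : LinearMap.BilinForm.Nondegenerate b := (LinearMap.IsRefl.nondegenerate_iff_separatingLeft hrefl).mpr hb_nondeg
  have hAC : finrank K ↥A = finrank K ↥C := hd12'
  have hV₀V₂ : finrank K ↥V₀ = finrank K ↥V₂ := by
    have h1 := LinearMap.BilinForm.finrank_orthogonal hndb A
    have h2 := LinearMap.BilinForm.finrank_orthogonal hndb C
    have h3 : finrank K ↥A ≤ finrank K V := Submodule.finrank_le A
    have h4 : finrank K ↥C ≤ finrank K V := Submodule.finrank_le C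
    omega
  set se : ↥V₀ ≃ₗ[K] ↥V₂ := LinearMap.linearEquivOfInjective sc hscinj hV₀V₂ with hsedef
  set se' : ↥V₀ ≃ₗ[K] ↥V₂ := LinearMap.linearEquivOfInjective sc' hsc'inj hV₀V₂ with hse'def
  set α : ↥V₀ ≃ₗ[K] ↥V₀ := se.trans se'.symm with hαdef
  have hkey : ∀ x : ↥V₀, s' (α x) = s x := by
    intro x
    have h1 : se' (α x) = se x := by
      rw [hαdef]
      simp [LinearEquiv.trans_apply]
    have h2 : (se' (α x) : V) = s' (α x) := by
      rw [hse'def, LinearMap.linearEquivOfInjective_apply]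
      rfl
    have h3 : (se x : V) = s x := by
      rw [hsedef, LinearMap.linearEquivOfInjective_apply]
      rfl
    rw [← h2, h1, h3]
  have hαiso : ∀ x y : ↥V₀, b ((α x) : V) ((α y) : V) = b (x : V) (y : V) := by
    intro x y
    have hU' : b ((α x) : V) ((α y) : V) = b (s' (α x)) (s' (α y)) := by
      have := hW'_iso _ (hs'prop (α x)).1 _ (hs'prop (α y)).1
      simp only at this
      linear_combination this
    have hUx : b (x : V) (y : V) = b (s x) (s y) := by
      have := hUiso _ (hsprop x).1 _ (hsprop y).1
      simp only at this
      linear_combination this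
    rw [hU', hUx, hkey, hkey]
  obtain ⟨gb, hgbiso, hgbV₀, hgbfix⟩ := WittAux.extend_isometry b hrefl V₀ hV₀nd α hαiso
  have hAfix : ∀ a ∈ A, gb a = a := by
    intro a ha
    apply hgbfix
    intro n hn
    exact hrefl _ _ (hV₀le hn a ha)
  -- final map equality
  refine ⟨ga.trans gb, g₂, ?_, hg₂iso, ?_⟩
  · intro v w
    rw [LinearEquiv.trans_apply, LinearEquiv.trans_apply, hgbiso, hgaiso]
  · have hcomp : LinearMap.prodMap ((ga.trans gb : V ≃ₗ[K] V) : V →ₗ[K] V) (g₂ : V →ₗ[K] V)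
        = (LinearMap.prodMap (gb : V →ₗ[K] V) LinearMap.id).comp pm := by
      apply LinearMap.ext
      intro p
      rfl
    rw [hcomp, Submodule.map_comp, ← hUdef]
    -- now show : map (prodMap gb id) U = W'
    have hZrank : finrank K
        ↥(U.map (LinearMap.prodMap (gb : V →ₗ[K] V) LinearMap.id)) = N := by
      have hE : U.map (LinearMap.prodMap (gb : V →ₗ[K] V) LinearMap.id)
          = U.map ((gb.prodCongr (LinearEquiv.refl K V) : (V × V) ≃ₗ[K] V × V) : (V × V) →ₗ[K] V × V)
          := rfl
      rw [hE, LinearEquiv.finrank_map_eq]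
      exact hUrank
    have hle : U.map (LinearMap.prodMap (gb : V →ₗ[K] V) LinearMap.id) ≤ W' := by
      rw [← hortW']
      rintro z ⟨u, hu, rfl⟩
      intro n hn
      show WittAux.Bprod b n _ = 0
      rw [WittAux.Bprod_apply]
      -- decompose u and n
      obtain ⟨v, w⟩ := u
      obtain ⟨v', w'⟩ := n
      simp only [LinearMap.prodMap_apply, LinearMap.id_apply]
      -- v ∈ orthogonal A
      have hvP : v ∈ LinearMap.BilinForm.orthogonal b A := by
        rw [← hfstU]
        exact ⟨(v, w), hu, rfl⟩
      have hv'P : v' ∈ LinearMap.BilinForm.orthogonal b A := by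
        rw [← hfstW']
        exact ⟨(v', w'), hn, rfl⟩
      rw [← hAsup] at hvP hv'P
      obtain ⟨a, ha, x₀, hx₀, hveq⟩ := Submodule.mem_sup.mp hvP
      obtain ⟨a', ha', x₀', hx₀', hv'eq⟩ := Submodule.mem_sup.mp hv'P
      set x : ↥V₀ := ⟨x₀, hx₀⟩ with hxdef
      set x' : ↥V₀ := ⟨x₀', hx₀'⟩ with hx'def
      -- w = s x + c
      have hwc : w - s x ∈ C := by
        have hm1 : ((a, 0) : V × V) ∈ U := (hU1 a).mpr ha
        have hm2 : ((x₀, s x) : V × V) ∈ U := (hsprop x).1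
        have : ((v - a - x₀, w - 0 - s x) : V × V) ∈ U := by
          have := Submodule.sub_mem U (Submodule.sub_mem U hu hm1) hm2
          simpa using this
        rw [show v - a - x₀ = 0 from by rw [← hveq]; abel] at this
        rw [sub_zero] at this
        exact (hU2 _).mp this
      have hw'c : w' - s' x' ∈ C := by
        have hm1 : ((a', 0) : V × V) ∈ W' := (hmemA a').mp ha'
        have hm2 : ((x₀', s' x') : V × V) ∈ W' := (hs'prop x').1
        have : ((v' - a' - x₀', w' - 0 - s' x') : V × V) ∈ W' := by
          have := Submodule.sub_mem W' (Submodule.sub_mem W' hn hm1) hm2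
          simpa using this
        rw [show v' - a' - x₀' = 0 from by rw [← hv'eq]; abel] at this
        rw [sub_zero] at this
        exact (hmemC _).mp this
      -- compute b v' (gb v)
      have hgbv : gb v = a + ((α x : ↥V₀) : V) := by
        rw [← hveq, map_add, hAfix a ha]
        congr 1
        exact hgbV₀ x
      have hLHS : b v' (gb v) = b (s' x') (s x) := by
        rw [hgbv, ← hv'eq]
        simp only [map_add, LinearMap.add_apply]
        have t1 : b a' a = 0 := hAiso a' ha' a ha
        have t2 : b a' ((α x : ↥V₀) : V) = 0 := hV₀le (α x).2 a' ha'
        have t3 : b x₀' a = 0 := hrefl _ _ (hV₀le hx₀' a ha)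
        have t4 : b x₀' ((α x : ↥V₀) : V) = b (s' x') (s x) := by
          have := hW'_iso _ (hs'prop x').1 _ (hs'prop (α x)).1
          simp only at this
          rw [hkey] at this
          linear_combination this
        rw [t1, t2, t3, t4]
        abel
      have hRHS : b w' w = b (s' x') (s x) := by
        have e1 : s' x' + (w' - s' x') = w' := by abel
        have e2 : s x + (w - s x) = w := by abel
        rw [← e1, ← e2]
        simp only [map_add, LinearMap.add_apply]
        have t1 : b (s' x') (w - s x) = 0 :=
          hrefl _ _ (hV₂le (hs'prop x').2 (w - s x) hwc)
        have t2 : b (w' - s' x') (s x) = 0 :=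
          hV₂le (hsprop x).2 (w' - s' x') hw'c
        have t3 : b (w' - s' x') (w - s x) = 0 := hCiso _ hw'c _ hwc
        rw [t1, t2, t3]
        abel
      linear_combination hLHS - hRHS
    have hfr : finrank K ↥W'
        ≤ finrank K ↥(U.map (LinearMap.prodMap (gb : V →ₗ[K] V) LinearMap.id)) := by
      rw [hZrank, hW'_dim]
    exact Submodule.eq_of_le_of_finrank_le hle hfr
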